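/- For every real α > 0 and every ε ∈ (0,1), if s ∈ (0,1) is the unique point with g(s) = α·(1/ε − 1), then for x ∈ (0,1) one has φ_α(x) < ε if and only if x < s; in particular the set {x ∈ [0,1] : φ_α(x) < ε} equals the half-open interval [0, s) and its Lebesgue measure equals s. -/

import Mathlib

noncomputable def f (x : ℝ) : ℝ := if 0 < x then Real.exp (-1 / x) else 0

noncomputable def phi (α : ℝ) (x : ℝ) : ℝ := α * f x / (α * f x + f (1 - x))

noncomputable def g (x : ℝ) : ℝ := Real.exp (1 / x - 1 / (1 - x))

lemma g_strictAntiOn : StrictAntiOn g (Set.Ioo (0 : ℝ) 1) := by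
  intro x hx y hy hxy
  unfold g
  apply Real.exp_lt_exp.mpr
  have h1 : 1 / y < 1 / x := one_div_lt_one_div_of_lt hx.1 hxy
  have h2 : 1 / (1 - x) < 1 / (1 - y) :=
    one_div_lt_one_div_of_lt (by linarith [hy.2]) (by linarith)
  linarith

theorem phi_sublevel (α : ℝ) (hα : 0 < α) (ε : ℝ) (hε : ε ∈ Set.Ioo (0 : ℝ) 1)
    (s : ℝ) (hs : s ∈ Set.Ioo (0 : ℝ) 1) (hgs : g s = α * (1 / ε - 1)) :
    (∀ x ∈ Set.Ioo (0 : ℝ) 1, (phi α x < ε ↔ x < s)) ∧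
    {x ∈ Set.Icc (0 : ℝ) 1 | phi α x < ε} = Set.Ico 0 s ∧
    MeasureTheory.volume {x ∈ Set.Icc (0 : ℝ) 1 | phi α x < ε} = ENNReal.ofReal s := by
  obtain ⟨hε0, hε1⟩ := hε
  obtain ⟨hs0, hs1⟩ := hs
  have key : ∀ x ∈ Set.Ioo (0:ℝ) 1, (phi α x < ε ↔ x < s) := by
    rintro x ⟨hx0, hx1⟩
    have h1x : (0:ℝ) < 1 - x := by linarith
    have hfx : f x = Real.exp (-1/x) := by simp [f, hx0]
    have hf1x : f (1-x) = Real.exp (-1/(1-x)) := by simp [f, h1x]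
    have hE : (0:ℝ) < Real.exp (-1/x) := Real.exp_pos _
    have hB : Real.exp (-1/(1-x)) = g x * Real.exp (-1/x) := by
      rw [g, ← Real.exp_add]
      ring_nf
    have hgx : 0 < g x := Real.exp_pos _
    have hden : 0 < α * f x + f (1-x) := by
      rw [hfx, hf1x]; positivity
    have step1 : phi α x < ε ↔ α * f x < ε * (α * f x + f (1-x)) := by
      rw [phi, div_lt_iff₀ hden]
    rw [step1, hfx, hf1x, hB]
    constructor
    · intro h
      have hgs' : g s < g x := by
        have h2 : α * (1 - ε) < ε * g x := by nlinarith [hE]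
        have h3 : ε * g s = α * (1 - ε) := by rw [hgs]; field_simp
        nlinarith
      by_contra hc
      push_neg at hc
      rcases eq_or_lt_of_le hc with h' | h'
      · rw [h'] at hgs'; exact lt_irrefl _ hgs'
      · exact absurd (g_strictAntiOn ⟨hs0, hs1⟩ ⟨hx0, hx1⟩ h') (by linarith)
    · intro h
      have hgs' : g s < g x := g_strictAntiOn ⟨hx0, hx1⟩ ⟨hs0, hs1⟩ h
      rw [hgs] at hgs'
      have h3 : ε * (α * (1/ε - 1)) = α * (1 - ε) := by field_simp
      have h4 : α * (1 - ε) < ε * g x := by nlinarith [mul_lt_mul_of_pos_left hgs' hε0]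
      nlinarith [mul_lt_mul_of_pos_right h4 hE]
  refine ⟨key, ?_, ?_⟩
  · ext x
    simp only [Set.mem_setOf_eq, Set.mem_Icc, Set.mem_Ico]
    constructor
    · rintro ⟨⟨hx0, hx1⟩, hphi⟩
      refine ⟨hx0, ?_⟩
      rcases eq_or_lt_of_le hx0 with h0 | h0
      · linarith
      rcases eq_or_lt_of_le hx1 with h1 | h1
      · exfalso
        have : phi α x = 1 := by
          subst h1
          rw [phi]
          norm_num [f]
          exact hα.ne'
        linarith
      · exact (key x ⟨h0, h1⟩).mp hphi
    · rintro ⟨hx0, hxs⟩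
      refine ⟨⟨hx0, by linarith⟩, ?_⟩
      rcases eq_or_lt_of_le hx0 with h0 | h0
      · have : phi α x = 0 := by rw [← h0, phi]; simp [f]
        linarith
      · exact (key x ⟨h0, by linarith⟩).mpr hxs
  · rw [show {x ∈ Set.Icc (0 : ℝ) 1 | phi α x < ε} = Set.Ico 0 s from ?_]
    · rw [Real.volume_Ico, sub_zero]
    · ext x
      simp only [Set.mem_setOf_eq, Set.mem_Icc, Set.mem_Ico]
      constructor
      · rintro ⟨⟨hx0, hx1⟩, hphi⟩
        refine ⟨hx0, ?_⟩
        rcases eq_or_lt_of_le hx0 with h0 | h0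
        · linarith
        rcases eq_or_lt_of_le hx1 with h1 | h1
        · exfalso
          have : phi α x = 1 := by
            subst h1
            rw [phi]
            norm_num [f]
            exact hα.ne'
          linarith
        · exact (key x ⟨h0, h1⟩).mp hphi
      · rintro ⟨hx0, hxs⟩
        refine ⟨⟨hx0, by linarith⟩, ?_⟩
        rcases eq_or_lt_of_le hx0 with h0 | h0
        · have : phi α x = 0 := by rw [← h0, phi]; simp [f]
          linarith
        · exact (key x ⟨h0, by linarith⟩).mpr hxs
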